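/- Let E be a normed lattice and I a directed nonempty set. Suppose that for each i ∈ I, E_i is a vector sublattice of E, that E_i ⊆ E_j whenever i ≤ j, and that E is the norm closure of ⋃_i E_i. Then the following are equivalent: (1) for all i ≤ j the inclusion map E_i → E_j is almost interval preserving, i.e. for every x ∈ E_i⁺, {y ∈ E_j : 0 ≤ y ≤ x} is contained in the closure of {y ∈ E_i : 0 ≤ y ≤ x}; (2) for every i, the inclusion map E_i → ⋃_j E_j is almost interval preserving; (3) for every i, the inclusion map E_i → E is almost interval preserving, i.e. for every x ∈ E_i⁺, {y ∈ E : 0 ≤ y ≤ x} is contained in the closure of {y ∈ E_i : 0 ≤ y ≤ x}. -/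

import Mathlib

open Set

/-- For a directed nested family of vector sublattices `S i` of a normed
lattice `E` whose union is dense, the following are equivalent: (1) all inclusions
`S i → S j` (`i ≤ j`) are almost interval preserving; (2) all inclusions `S i → ⋃ j, S j`
are almost interval preserving; (3) all inclusions `S i → E` are almost interval
preserving. -/
theorem nested_sublattices_almostIntervalPreserving_tfae
    {E : Type*} [NormedAddCommGroup E] [Lattice E] [HasSolidNorm E] [IsOrderedAddMonoid E]
    [NormedSpace ℝ E]
    {ι : Type*} [Preorder ι] [IsDirected ι (· ≤ ·)] [Nonempty ι]
    (S : ι → Submodule ℝ E)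
    (hlat : ∀ i, ∀ x y : E, x ∈ S i → y ∈ S i → x ⊔ y ∈ S i)
    (hmono : ∀ i j, i ≤ j → S i ≤ S j)
    (hdense : closure (⋃ i, (S i : Set E)) = univ) :
    List.TFAE
      [∀ i j, i ≤ j → ∀ x ∈ S i, 0 ≤ x →
          {y : E | y ∈ S j ∧ y ∈ Icc 0 x} ⊆ closure {y : E | y ∈ S i ∧ y ∈ Icc 0 x},
       ∀ i, ∀ x ∈ S i, 0 ≤ x →
          {y : E | (∃ j, y ∈ S j) ∧ y ∈ Icc 0 x} ⊆ closure {y : E | y ∈ S i ∧ y ∈ Icc 0 x},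
       ∀ i, ∀ x ∈ S i, 0 ≤ x →
          Icc (0 : E) x ⊆ closure {y : E | y ∈ S i ∧ y ∈ Icc 0 x}] := by
  have hinf : ∀ i, ∀ x y : E, x ∈ S i → y ∈ S i → x ⊓ y ∈ S i := by
    intro i x y hx hy
    have : -(-x ⊔ -y) ∈ S i := (S i).neg_mem (hlat i _ _ ((S i).neg_mem hx) ((S i).neg_mem hy))
    simpa [neg_sup] using this
  tfae_have 1 → 3
  · intro h1 i x hx hxpos y hy
    rw [Metric.mem_closure_iff]
    intro ε hε
    -- approximate y by an element of some S j
    have hyc : y ∈ closure (⋃ i, (S i : Set E)) := by rw [hdense]; trivial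
    rw [Metric.mem_closure_iff] at hyc
    obtain ⟨z, hz, hzd⟩ := hyc (ε / 2) (by positivity)
    obtain ⟨j, hzj⟩ := mem_iUnion.mp hz
    obtain ⟨k, hik, hjk⟩ := directed_of (· ≤ ·) i j
    -- truncate z into the interval [0, x] inside S k
    set w : E := (z ⊔ 0) ⊓ x with hw
    have hwk : w ∈ S k :=
      hinf k _ _ (hlat k _ _ (hmono j k hjk hzj) (S k).zero_mem) (hmono i k hik hx)
    have hw0 : 0 ≤ w := le_inf le_sup_right hxpos
    have hwx : w ≤ x := inf_le_right
    have hyeq : y = (y ⊔ 0) ⊓ x := by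
      rw [sup_eq_left.mpr hy.1, inf_eq_left.mpr hy.2]
    have hwy : ‖w - y‖ < ε / 2 := by
      have h1' : |w - y| ≤ |z - y| := by
        conv_lhs => rw [hw, hyeq]
        calc |(z ⊔ 0) ⊓ x - (y ⊔ 0) ⊓ x| ≤ |z ⊔ 0 - y ⊔ 0| := abs_inf_sub_inf_le_abs _ _ _
          _ ≤ |z - y| := abs_sup_sub_sup_le_abs _ _ _
      have : ‖w - y‖ ≤ ‖z - y‖ := norm_le_norm_of_abs_le_abs h1'
      calc ‖w - y‖ ≤ ‖z - y‖ := this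
        _ = dist y z := by rw [dist_eq_norm, ← norm_neg (z - y), neg_sub]
        _ < ε / 2 := hzd
    -- use (1) to approximate w by an element of S i ∩ [0, x]
    have hwcl : w ∈ closure {v : E | v ∈ S i ∧ v ∈ Icc 0 x} :=
      h1 i k hik x hx hxpos ⟨hwk, hw0, hwx⟩
    rw [Metric.mem_closure_iff] at hwcl
    obtain ⟨c, hc, hcd⟩ := hwcl (ε / 2) (by positivity)
    refine ⟨c, hc, ?_⟩
    calc dist y c ≤ dist y w + dist w c := dist_triangle _ _ _
      _ < ε / 2 + ε / 2 := by
          refine add_lt_add ?_ hcd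
          rw [dist_eq_norm, ← norm_neg]
          simpa [neg_sub] using hwy
      _ = ε := by ring
  tfae_have 3 → 2
  · intro h3 i x hx hxpos y hy
    exact h3 i x hx hxpos hy.2
  tfae_have 2 → 1
  · intro h2 i j _ x hx hxpos y hy
    exact h2 i x hx hxpos ⟨⟨j, hy.1⟩, hy.2⟩
  tfae_finish
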